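/- arXiv:2201.05871 — 5 statements merged into one kernel-verified Lean document; each statement's English description precedes it below -/
import Mathlib

section
/- Let p be an odd prime and let y1, y2, y3 ∈ ℤ_p satisfy ‖y1‖_p = ‖y2‖_p = ‖y3‖_p = 1 and y1² + y2² = y3². Then there exist t, u ∈ ℤ_p with ‖t‖_p = ‖u‖_p = ‖1−t²‖_p = ‖1+t²‖_p = 1 such that y1 = (1−t²)·u, y2 = 2t·u and y3 = (1+t²)·u. -/
theorem stmt_5 (p : ℕ) [hp : Fact p.Prime] (hodd : Odd p)
    (y1 y2 y3 : ℤ_[p]) (h1 : ‖y1‖ = 1) (h2 : ‖y2‖ = 1) (h3 : ‖y3‖ = 1)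
    (h : y1 ^ 2 + y2 ^ 2 = y3 ^ 2) :
    ∃ t u : ℤ_[p], ‖t‖ = 1 ∧ ‖u‖ = 1 ∧ ‖1 - t ^ 2‖ = 1 ∧ ‖1 + t ^ 2‖ = 1 ∧
      y1 = (1 - t ^ 2) * u ∧ y2 = 2 * t * u ∧ y3 = (1 + t ^ 2) * u := by
  -- 2 is a unit
  have h2norm : ‖(2 : ℤ_[p])‖ = 1 := by
    have hndvd : ¬ ((p : ℤ) ∣ (2 : ℤ)) := by
      intro hdvd
      have hp2 : p ∣ 2 := Int.ofNat_dvd.mp (by exact_mod_cast hdvd)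
      have hpe : p = 2 := (Nat.prime_dvd_prime_iff_eq hp.out Nat.prime_two).mp hp2
      rw [hpe] at hodd
      exact (Nat.not_odd_iff_even.mpr (by decide)) hodd
    have : ¬ ‖((2 : ℤ) : ℤ_[p])‖ < 1 := by
      rw [PadicInt.norm_int_lt_one_iff_dvd]; exact hndvd
    have hle : ‖((2 : ℤ) : ℤ_[p])‖ ≤ 1 := PadicInt.norm_le_one _
    have : ‖((2 : ℤ) : ℤ_[p])‖ = 1 := le_antisymm hle (not_lt.mp this)
    simpa using this
  -- y1 + y3 is a unit
  have hkey : y2 ^ 2 = (y3 - y1) * (y1 + y3) := by linear_combination h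
  have hvnorm : ‖y1 + y3‖ = 1 := by
    refine le_antisymm (PadicInt.norm_le_one _) ?_
    by_contra hlt
    push_neg at hlt
    have h1' : (1 : ℝ) = ‖y2 ^ 2‖ := by rw [norm_pow, h2]; norm_num
    have : ‖y2 ^ 2‖ ≤ ‖y1 + y3‖ := by
      rw [hkey, norm_mul]
      calc ‖y3 - y1‖ * ‖y1 + y3‖ ≤ 1 * ‖y1 + y3‖ :=
            mul_le_mul_of_nonneg_right (PadicInt.norm_le_one _) (norm_nonneg _)
        _ = ‖y1 + y3‖ := one_mul _
    linarith
  obtain ⟨V, hV⟩ := PadicInt.isUnit_iff.mpr hvnorm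
  obtain ⟨T, hT⟩ := PadicInt.isUnit_iff.mpr h2norm
  set a : ℤ_[p] := ((V⁻¹ : ℤ_[p]ˣ) : ℤ_[p]) with ha
  set b : ℤ_[p] := ((T⁻¹ : ℤ_[p]ˣ) : ℤ_[p]) with hb
  have haV : (y1 + y3) * a = 1 := by rw [← hV, ha]; exact_mod_cast V.mul_inv
  have hbT : (2 : ℤ_[p]) * b = 1 := by rw [← hT, hb]; exact_mod_cast T.mul_inv
  have hanorm : ‖a‖ = 1 := PadicInt.norm_units _
  have hbnorm : ‖b‖ = 1 := PadicInt.norm_units _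
  refine ⟨y2 * a, (y1 + y3) * b, ?_, ?_, ?_, ?_, ?_, ?_, ?_⟩
  · rw [norm_mul, h2, hanorm]; norm_num
  · rw [norm_mul, hvnorm, hbnorm]; norm_num
  · have e1 : y1 = (1 - (y2 * a) ^ 2) * ((y1 + y3) * b) := by
      linear_combination (-y1) * hbT + (b * (y3 - y1) * ((y1 + y3) * a + 1)) * haV
        + (b * a ^ 2 * (y1 + y3)) * h
    have := congrArg norm e1
    rw [norm_mul, norm_mul, hvnorm, hbnorm, h1] at this
    linarith [this]
  · have e3 : y3 = (1 + (y2 * a) ^ 2) * ((y1 + y3) * b) := by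
      linear_combination (-y3) * hbT + (-b * (y3 - y1) * ((y1 + y3) * a + 1)) * haV
        + (-b * a ^ 2 * (y1 + y3)) * h
    have := congrArg norm e3
    rw [norm_mul, norm_mul, hvnorm, hbnorm, h3] at this
    linarith [this]
  · linear_combination (-y1) * hbT + (b * (y3 - y1) * ((y1 + y3) * a + 1)) * haV
      + (b * a ^ 2 * (y1 + y3)) * h
  · linear_combination (-y2 * 2 * b) * haV + (-y2) * hbT
  · linear_combination (-y3) * hbT + (-b * (y3 - y1) * ((y1 + y3) * a + 1)) * haV
      + (-b * a ^ 2 * (y1 + y3)) * h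
end

section
/- Let p be an odd prime, n ≥ 1 an integer, and y1, y2 ∈ ℤ with p ∤ y1·y2 and y1² + y2² ≡ 1 (mod p^n). Then there exists t ∈ ℤ with p ∤ t·(1−t²)·(1+t²) such that (1+t²)·y1 ≡ 1−t² (mod p^n) and (1+t²)·y2 ≡ 2t (mod p^n). -/
theorem stmt_6 (p : ℕ) (hp : p.Prime) (hodd : Odd p) (n : ℕ) (hn : 1 ≤ n)
    (y1 y2 : ℤ) (hy : ¬ (p : ℤ) ∣ y1 * y2)
    (h : y1 ^ 2 + y2 ^ 2 ≡ 1 [ZMOD (p : ℤ) ^ n]) :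
    ∃ t : ℤ, ¬ (p : ℤ) ∣ t * (1 - t ^ 2) * (1 + t ^ 2) ∧
      (1 + t ^ 2) * y1 ≡ 1 - t ^ 2 [ZMOD (p : ℤ) ^ n] ∧
      (1 + t ^ 2) * y2 ≡ 2 * t [ZMOD (p : ℤ) ^ n] := by
  haveI : Fact p.Prime := ⟨hp⟩
  have hpint : Prime (p : ℤ) := Int.prime_iff_natAbs_prime.mpr (by simpa using hp)
  have hpy1 : ¬ (p:ℤ) ∣ y1 := fun hd => hy (hd.mul_right _)
  have hpy2 : ¬ (p:ℤ) ∣ y2 := fun hd => hy (hd.mul_left _)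
  have hppn : (p:ℤ) ∣ (p:ℤ)^n := dvd_pow_self _ (by omega)
  -- translation between ModEq at p^n and ZMod (p^n)
  have key : ∀ a b : ℤ, a ≡ b [ZMOD (p:ℤ)^n] ↔ ((a : ZMod (p^n)) = b) := by
    intro a b
    rw [ZMod.intCast_eq_intCast_iff]
    push_cast
    rfl
  have keyp : ∀ a : ℤ, (p:ℤ) ∣ a ↔ ((a : ZMod p) = 0) := by
    intro a; rw [ZMod.intCast_zmod_eq_zero_iff_dvd]
  -- p does not divide 1 + y1
  have hs : ¬ (p:ℤ) ∣ (1 + y1) := by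
    intro hd
    have hmodp : y1 ^ 2 + y2 ^ 2 ≡ 1 [ZMOD (p:ℤ)] := h.of_dvd hppn
    have h1 : ((y1:ZMod p))^2 + (y2:ZMod p)^2 = 1 := by
      have := (ZMod.intCast_eq_intCast_iff _ _ _).mpr hmodp
      push_cast at this
      exact this
    have h2 : ((1:ZMod p) + y1) = 0 := by
      have := (keyp _).mp hd; push_cast at this; exact this
    have h3 : ((y2:ZMod p))^2 = 0 := by linear_combination h1 + (1 - (y1:ZMod p)) * h2
    have h4 : (y2 : ZMod p) = 0 := pow_eq_zero_iff (n := 2) (by norm_num) |>.mp h3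
    exact hpy2 ((keyp _).mpr h4)
  -- coprimality and inverse
  have hcop : IsCoprime ((p:ℤ)^n) (1 + y1) :=
    IsCoprime.pow_left ((hpint.coprime_iff_not_dvd).mpr hs)
  obtain ⟨a, b, hab⟩ := hcop
  set t : ℤ := y2 * b with ht
  -- work in ZMod (p^n)
  have hu : (b : ZMod (p^n)) * ((1:ZMod (p^n)) + y1) = 1 := by
    have h0 := congrArg (fun z : ℤ => (z : ZMod (p^n))) hab
    push_cast at h0
    have hz : ((p:ZMod (p^n)))^n = 0 := by
      have : ((p^n : ℕ) : ZMod (p^n)) = 0 := ZMod.natCast_self _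
      push_cast at this; exact this
    rw [hz] at h0
    linear_combination h0
  have husS : IsUnit ((1:ZMod (p^n)) + y1) :=
    IsUnit.of_mul_eq_one b (by rw [mul_comm]; exact hu)
  have h' : ((y1:ZMod (p^n)))^2 + (y2:ZMod (p^n))^2 = 1 := by
    have := (key _ _).mp h; push_cast at this; exact this
  have hst : ((1:ZMod (p^n))+y1) * ((y2:ZMod (p^n))*b) = y2 := by
    linear_combination (y2 : ZMod (p^n)) * hu
  have ht2 : ((1:ZMod (p^n))+y1)^2 * ((y2:ZMod (p^n))*b)^2 = (y2:ZMod (p^n))^2 := by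
    linear_combination (((1:ZMod (p^n))+y1)*((y2:ZMod (p^n))*b) + y2) * hst
  have g1 : ((1:ZMod (p^n)) + ((y2:ZMod (p^n))*b)^2) * y1 = 1 - ((y2:ZMod (p^n))*b)^2 := by
    apply (husS.pow 2).mul_left_cancel
    linear_combination ((y1:ZMod (p^n))+1)*ht2 + ((y1:ZMod (p^n))+1)*h'
  have g2 : ((1:ZMod (p^n)) + ((y2:ZMod (p^n))*b)^2) * y2 = 2 * ((y2:ZMod (p^n))*b) := by
    apply (husS.pow 2).mul_left_cancel
    linear_combination (y2:ZMod (p^n))*ht2 - 2*((1:ZMod (p^n))+y1)*hst + (y2:ZMod (p^n))*h'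
  have c1 : (1 + t ^ 2) * y1 ≡ 1 - t ^ 2 [ZMOD (p:ℤ)^n] := by
    rw [key, ht]; push_cast; exact g1
  have c2 : (1 + t ^ 2) * y2 ≡ 2 * t [ZMOD (p:ℤ)^n] := by
    rw [key, ht]; push_cast; exact g2
  refine ⟨t, ?_, c1, c2⟩
  -- nondivisibility mod p
  intro hd
  have hnd2 : ¬ (p:ℤ) ∣ 2 := by
    intro hdd
    have h1 : (p:ℤ) ≤ 2 := Int.le_of_dvd (by norm_num) hdd
    have h2 : p ≤ 2 := by exact_mod_cast h1
    have h3 := hp.two_le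
    have h4 := Nat.odd_iff.mp hodd
    omega
  have hF2 : (2 : ZMod p) ≠ 0 := by
    intro h0
    exact hnd2 ((keyp 2).mpr (by push_cast; exact h0))
  have e1 : ((1:ZMod p) + (t:ZMod p)^2) * y1 = 1 - (t:ZMod p)^2 := by
    have := (ZMod.intCast_eq_intCast_iff _ _ _).mpr (c1.of_dvd hppn)
    push_cast at this; exact this
  have e2 : ((1:ZMod p) + (t:ZMod p)^2) * y2 = 2 * t := by
    have := (ZMod.intCast_eq_intCast_iff _ _ _).mpr (c2.of_dvd hppn)
    push_cast at this; exact this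
  have hy1F : (y1 : ZMod p) ≠ 0 := fun h0 => hpy1 ((keyp _).mpr h0)
  have hy2F : (y2 : ZMod p) ≠ 0 := fun h0 => hpy2 ((keyp _).mpr h0)
  have h1t : (1:ZMod p) + (t:ZMod p)^2 ≠ 0 := by
    intro h0
    rw [h0, zero_mul] at e2
    have htz : (t : ZMod p) = 0 := by
      rcases mul_eq_zero.mp e2.symm with h9 | h9
      · exact absurd h9 hF2
      · exact h9
    rw [htz] at h0
    simp at h0
  have htF : (t : ZMod p) ≠ 0 := by
    intro h0
    rw [h0] at e2
    simp at e2
    exact absurd e2 hy2F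
  have h1mt : (1:ZMod p) - (t:ZMod p)^2 ≠ 0 := e1 ▸ mul_ne_zero h1t hy1F
  have hcast := (keyp _).mp hd
  push_cast at hcast
  rcases mul_eq_zero.mp hcast with h9 | h9
  · rcases mul_eq_zero.mp h9 with h8 | h8
    · exact htF h8
    · exact h1mt h8
  · exact h1t h9
end

section
/- Let p be an odd prime and n ≥ 1 an integer. Then the number of pairs (y1, y2) ∈ (ℤ/p^nℤ)² such that y1 and y2 are both units of ℤ/p^nℤ and y1² + y2² = 1 in ℤ/p^nℤ equals p^{n−1}·(p − s(p)). -/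
section Aux

lemma aux_unit_iff (p : ℕ) (hp : p.Prime) (n : ℕ) (hn : 1 ≤ n) (a : ZMod (p ^ n)) :
    IsUnit a ↔ ZMod.castHom (dvd_pow_self p (by omega : n ≠ 0)) (ZMod p) a ≠ 0 := by
  haveI : NeZero (p ^ n) := ⟨pow_ne_zero n hp.pos.ne'⟩
  have ha : ((a.val : ℕ) : ZMod (p ^ n)) = a := by
    rw [ZMod.natCast_val, ZMod.cast_id]
  rw [ZMod.castHom_apply, ← ZMod.natCast_val]
  rw [← ha, ZMod.isUnit_iff_coprime, Ne, ZMod.natCast_eq_zero_iff]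
  rw [Nat.coprime_pow_right_iff (by omega), Nat.coprime_comm, hp.coprime_iff_not_dvd]
  simp [ha]

lemma aux_fiber_card (p : ℕ) (hp : p.Prime) (n : ℕ) (hn : 1 ≤ n) [NeZero (p ^ n)] (a : ZMod p) :
    (Finset.univ.filter
      (fun t : ZMod (p ^ n) => ZMod.castHom (dvd_pow_self p (by omega : n ≠ 0)) (ZMod p) t = a)).card
      = p ^ (n - 1) := by
  haveI : NeZero p := ⟨hp.pos.ne'⟩
  have hpn : p ^ (n - 1) * p = p ^ n := by
    rw [← pow_succ]; congr 1; omega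
  have haval : a.val < p := a.val_lt
  rw [← Finset.card_range (p ^ (n - 1))]
  symm
  apply Finset.card_bij' (fun q _ => ((q * p + a.val : ℕ) : ZMod (p ^ n)))
    (fun t _ => t.val / p)
  · intro q hq
    simp only [Finset.mem_range] at hq
    simp only [Finset.mem_filter, Finset.mem_univ, true_and]
    rw [map_natCast]
    push_cast
    rw [ZMod.natCast_self, mul_zero, zero_add, ZMod.natCast_val, ZMod.cast_id]
  · intro t ht
    simp only [Finset.mem_range]
    have h1 : t.val < p ^ (n - 1) * p := by rw [hpn]; exact t.val_lt
    exact Nat.div_lt_of_lt_mul (by rwa [mul_comm] at h1)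
  · intro q hq
    simp only [Finset.mem_range] at hq
    have hlt : q * p + a.val < p ^ n := by
      calc q * p + a.val < (q + 1) * p := by rw [add_mul, one_mul]; omega
        _ ≤ p ^ (n - 1) * p := Nat.mul_le_mul_right p (by omega)
        _ = p ^ n := hpn
    rw [ZMod.val_cast_of_lt hlt, mul_comm, Nat.mul_add_div hp.pos,
      Nat.div_eq_of_lt haval, add_zero]
  · intro t ht
    simp only [Finset.mem_filter, Finset.mem_univ, true_and] at ht
    have h2 : ((t.val : ℕ) : ZMod p) = a := by
      rw [← ht, ZMod.castHom_apply, ZMod.natCast_val]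
    have hmod : t.val % p = a.val := by rw [← h2, ZMod.val_natCast]
    have h3 : t.val / p * p + a.val = t.val := by
      rw [← hmod, mul_comm]; exact Nat.div_add_mod _ _
    rw [h3, ZMod.natCast_val, ZMod.cast_id]

lemma aux_subset_count (p : ℕ) (hp : p.Prime) (n : ℕ) (hn : 1 ≤ n) [NeZero (p ^ n)]
    (T : Finset (ZMod p)) :
    Nat.card {t : ZMod (p ^ n) //
      ZMod.castHom (dvd_pow_self p (by omega : n ≠ 0)) (ZMod p) t ∈ T} = p ^ (n - 1) * T.card := by
  haveI : NeZero p := ⟨hp.pos.ne'⟩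
  rw [Nat.card_eq_fintype_card, Fintype.card_subtype]
  set π := ZMod.castHom (dvd_pow_self p (by omega : n ≠ 0)) (ZMod p) with hπ
  rw [Finset.card_eq_sum_card_fiberwise (f := fun t => π t) (s := Finset.univ.filter (fun t => π t ∈ T)) (t := T)
    (fun x hx => (Finset.mem_filter.mp hx).2)]
  rw [Finset.sum_congr rfl (fun a ha => ?_), Finset.sum_const, smul_eq_mul, mul_comm]
  rw [Finset.filter_filter]
  have heq : Finset.filter (fun t => π t ∈ T ∧ π t = a) (Finset.univ : Finset (ZMod (p ^ n)))
      = Finset.filter (fun t => π t = a) Finset.univ := by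
    apply Finset.filter_congr
    intro x _
    exact ⟨And.right, fun h => ⟨h ▸ ha, h⟩⟩
  rw [heq]
  exact aux_fiber_card p hp n hn a

lemma aux_S_card (p : ℕ) (hp : p.Prime) (hodd : Odd p) [Fact p.Prime] :
    (Finset.univ.filter (fun a : ZMod p => a = 0 ∨ a ^ 2 = 1 ∨ a ^ 2 = -1)).card
      = if p % 4 = 1 then 5 else 3 := by
  haveI : NeZero p := ⟨hp.pos.ne'⟩
  have hp2 : p ≠ 2 := by rintro rfl; exact (by norm_num : ¬ Odd 2) hodd
  have h2 : (2 : ZMod p) ≠ 0 := by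
    intro h
    have h' : ((2 : ℕ) : ZMod p) = 0 := by push_cast; exact h
    rw [ZMod.natCast_eq_zero_iff] at h'
    have := Nat.le_of_dvd (by norm_num) h'
    have := hp.two_le
    omega
  have hne : (1 : ZMod p) ≠ -1 := fun h => h2 (by linear_combination h)
  have sq1 : ∀ a : ZMod p, a ^ 2 = 1 ↔ (a = 1 ∨ a = -1) := fun a => by
    constructor
    · intro h
      have h0 : (a - 1) * (a + 1) = 0 := by linear_combination h
      rcases mul_eq_zero.mp h0 with h' | h'
      · exact Or.inl (by linear_combination h')
      · exact Or.inr (by linear_combination h')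
    · rintro (rfl | rfl) <;> ring
  by_cases h14 : p % 4 = 1
  · rw [if_pos h14]
    obtain ⟨i, hi⟩ : IsSquare (-1 : ZMod p) :=
      (ZMod.exists_sq_eq_neg_one_iff).mpr (by omega)
    have hi2 : i ^ 2 = -1 := by rw [sq]; exact hi.symm
    have sqm1 : ∀ a : ZMod p, a ^ 2 = -1 ↔ (a = i ∨ a = -i) := fun a => by
      constructor
      · intro h
        have h0 : (a - i) * (a + i) = 0 := by linear_combination h - hi2
        rcases mul_eq_zero.mp h0 with h' | h'
        · exact Or.inl (by linear_combination h')
        · exact Or.inr (by linear_combination h')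
      · rintro (rfl | rfl) <;> linear_combination hi2
    have hi0 : i ≠ 0 := by intro h; rw [h] at hi2; simp at hi2
    have hi1 : i ≠ 1 := by intro h; rw [h] at hi2; exact hne (by linear_combination hi2)
    have him1 : i ≠ -1 := by intro h; rw [h] at hi2; exact hne (by linear_combination hi2)
    have hii : i ≠ -i := by
      intro h
      have h0 : 2 * i = 0 := by linear_combination h
      rcases mul_eq_zero.mp h0 with h' | h'
      · exact h2 h'
      · exact hi0 h'
    have hset : (Finset.univ.filter (fun a : ZMod p => a = 0 ∨ a ^ 2 = 1 ∨ a ^ 2 = -1))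
        = ({0, 1, -1, i, -i} : Finset (ZMod p)) := by
      ext a
      simp only [Finset.mem_filter, Finset.mem_univ, true_and, Finset.mem_insert,
        Finset.mem_singleton, sq1, sqm1]
      tauto
    rw [hset]
    rw [Finset.card_insert_of_notMem (by
      simp only [Finset.mem_insert, Finset.mem_singleton]
      push_neg
      exact ⟨zero_ne_one, fun h => one_ne_zero (α := ZMod p) (by linear_combination h),
        fun h => hi0 h.symm, fun h => hi0 (by linear_combination h)⟩)]
    rw [Finset.card_insert_of_notMem (by
      simp only [Finset.mem_insert, Finset.mem_singleton]
      push_neg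
      exact ⟨hne, fun h => hi1 h.symm, fun h => him1 (by linear_combination h)⟩)]
    rw [Finset.card_insert_of_notMem (by
      simp only [Finset.mem_insert, Finset.mem_singleton]
      push_neg
      exact ⟨fun h => him1 h.symm, fun h => hi1 (by linear_combination h)⟩)]
    rw [Finset.card_insert_of_notMem (by
      simp only [Finset.mem_singleton]
      exact hii)]
    simp
  · rw [if_neg h14]
    have hmod : p % 4 = 3 := by rcases hodd with ⟨k, rfl⟩; omega
    have sqm1 : ∀ a : ZMod p, ¬ (a ^ 2 = -1) := fun a h => by
      have : IsSquare (-1 : ZMod p) := ⟨a, by rw [← h]; ring⟩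
      exact (ZMod.exists_sq_eq_neg_one_iff.mp this) hmod
    have hset : (Finset.univ.filter (fun a : ZMod p => a = 0 ∨ a ^ 2 = 1 ∨ a ^ 2 = -1))
        = ({0, 1, -1} : Finset (ZMod p)) := by
      ext a
      simp only [Finset.mem_filter, Finset.mem_univ, true_and, Finset.mem_insert,
        Finset.mem_singleton, sq1]
      constructor
      · rintro (h | h | h)
        · tauto
        · tauto
        · exact absurd h (sqm1 a)
      · tauto
    rw [hset]
    rw [Finset.card_insert_of_notMem (by
      simp only [Finset.mem_insert, Finset.mem_singleton]
      push_neg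
      exact ⟨zero_ne_one, fun h => one_ne_zero (α := ZMod p) (by linear_combination h)⟩)]
    rw [Finset.card_insert_of_notMem (by
      simp only [Finset.mem_singleton]
      exact hne)]
    simp

noncomputable def aux_main_equiv (R : Type*) [CommRing R] (two : IsUnit (2 : R)) :
    {y : R × R // IsUnit y.1 ∧ IsUnit y.2 ∧ y.1 ^ 2 + y.2 ^ 2 = 1} ≃
    {t : R // IsUnit t ∧ IsUnit (1 - t ^ 2) ∧ IsUnit (1 + t ^ 2)} where
  toFun y := by
    refine ⟨y.1.2 * Ring.inverse (y.1.1 + 1), ?_, ?_, ?_⟩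
    all_goals {
      obtain ⟨⟨x, z⟩, hx, hz, heq⟩ := y
      simp only at *
      have h1 : (x + 1) * (x - 1) = -(z ^ 2) := by linear_combination heq
      have hx1 : IsUnit (x + 1) := isUnit_of_mul_isUnit_left (h1 ▸ (hz.pow 2).neg)
      have hwu : IsUnit (Ring.inverse (x + 1)) := isUnit_ringInverse.mpr hx1
      set w := Ring.inverse (x + 1) with hwdef
      have hw : (x + 1) * w = 1 := Ring.mul_inverse_cancel _ hx1
      first
      | exact hz.mul hwu
      | { have h1m : 1 - (z * w) ^ 2 = 2 * x * w := by
            linear_combination (-(1 - x * w + w)) * hw + (-(w ^ 2)) * heq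
          rw [h1m]; exact (two.mul hx).mul hwu }
      | { have h1p : 1 + (z * w) ^ 2 = 2 * w := by
            linear_combination (w - x * w - 1) * hw + w ^ 2 * heq
          rw [h1p]; exact two.mul hwu } }
  invFun t := by
    refine ⟨((1 - t.1 ^ 2) * Ring.inverse (1 + t.1 ^ 2),
             2 * t.1 * Ring.inverse (1 + t.1 ^ 2)), ?_, ?_, ?_⟩
    all_goals {
      obtain ⟨t, ht, h1m, h1p⟩ := t
      simp only at *
      have hvu : IsUnit (Ring.inverse (1 + t ^ 2)) := isUnit_ringInverse.mpr h1p
      set v := Ring.inverse (1 + t ^ 2) with hvdef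
      have hv : (1 + t ^ 2) * v = 1 := Ring.mul_inverse_cancel _ h1p
      first
      | exact h1m.mul hvu
      | exact (two.mul ht).mul hvu
      | linear_combination ((1 + t ^ 2) * v + 1) * hv }
  left_inv := by
    rintro ⟨⟨x, z⟩, hx, hz, heq⟩
    apply Subtype.ext
    apply Prod.ext <;> {
      simp only
      have h1 : (x + 1) * (x - 1) = -(z ^ 2) := by linear_combination heq
      have hx1 : IsUnit (x + 1) := isUnit_of_mul_isUnit_left (h1 ▸ (hz.pow 2).neg)
      have hwu : IsUnit (Ring.inverse (x + 1)) := isUnit_ringInverse.mpr hx1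
      set w := Ring.inverse (x + 1) with hwdef
      have hw : (x + 1) * w = 1 := Ring.mul_inverse_cancel _ hx1
      set t := z * w with htdef
      have h1p : 1 + t ^ 2 = 2 * w := by
        linear_combination (w - x * w - 1) * hw + w ^ 2 * heq
      have h1m : 1 - t ^ 2 = 2 * x * w := by
        linear_combination (-(1 - x * w + w)) * hw + (-(w ^ 2)) * heq
      have hpu : IsUnit (1 + t ^ 2) := by rw [h1p]; exact two.mul hwu
      have hv : (1 + t ^ 2) * Ring.inverse (1 + t ^ 2) = 1 := Ring.mul_inverse_cancel _ hpu
      set v := Ring.inverse (1 + t ^ 2) with hvdef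
      apply hpu.mul_left_cancel
      first
      | { calc (1 + t ^ 2) * ((1 - t ^ 2) * v) = (1 - t ^ 2) * ((1 + t ^ 2) * v) := by ring
            _ = 1 - t ^ 2 := by rw [hv, mul_one]
            _ = 2 * x * w := h1m
            _ = x * (2 * w) := by ring
            _ = x * (1 + t ^ 2) := by rw [h1p]
            _ = (1 + t ^ 2) * x := by ring }
      | { calc (1 + t ^ 2) * (2 * t * v) = 2 * t * ((1 + t ^ 2) * v) := by ring
            _ = 2 * t := by rw [hv, mul_one]
            _ = z * (2 * w) := by rw [htdef]; ring
            _ = z * (1 + t ^ 2) := by rw [h1p]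
            _ = (1 + t ^ 2) * z := by ring } }
  right_inv := by
    rintro ⟨t, ht, h1m, h1p⟩
    apply Subtype.ext
    simp only
    have hvu : IsUnit (Ring.inverse (1 + t ^ 2)) := isUnit_ringInverse.mpr h1p
    set v := Ring.inverse (1 + t ^ 2) with hvdef
    have hv : (1 + t ^ 2) * v = 1 := Ring.mul_inverse_cancel _ h1p
    have h2v : (1 - t ^ 2) * v + 1 = 2 * v := by linear_combination -hv
    have hx1 : IsUnit ((1 - t ^ 2) * v + 1) := by rw [h2v]; exact two.mul hvu
    have hw : ((1 - t ^ 2) * v + 1) * Ring.inverse ((1 - t ^ 2) * v + 1) = 1 :=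
      Ring.mul_inverse_cancel _ hx1
    set w := Ring.inverse ((1 - t ^ 2) * v + 1) with hwdef
    apply hx1.mul_left_cancel
    calc ((1 - t ^ 2) * v + 1) * (2 * t * v * w)
        = 2 * t * v * (((1 - t ^ 2) * v + 1) * w) := by ring
      _ = 2 * t * v := by rw [hw, mul_one]
      _ = t * (2 * v) := by ring
      _ = t * ((1 - t ^ 2) * v + 1) := by rw [h2v]
      _ = ((1 - t ^ 2) * v + 1) * t := by ring

end Aux

theorem stmt_9 (p : ℕ) (hp : p.Prime) (hodd : Odd p) (n : ℕ) (hn : 1 ≤ n) :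
    Nat.card {y : ZMod (p ^ n) × ZMod (p ^ n) //
        IsUnit y.1 ∧ IsUnit y.2 ∧ y.1 ^ 2 + y.2 ^ 2 = 1} =
      p ^ (n - 1) * (p - if p % 4 = 1 then 5 else 3) := by
  haveI : Fact p.Prime := ⟨hp⟩
  haveI : NeZero (p ^ n) := ⟨pow_ne_zero n hp.pos.ne'⟩
  have two : IsUnit (2 : ZMod (p ^ n)) := by
    have h2 : ((2 : ℕ) : ZMod (p ^ n)) = (2 : ZMod (p ^ n)) := by push_cast; ring
    rw [← h2, ZMod.isUnit_iff_coprime]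
    exact Nat.coprime_two_left.mpr (hodd.pow)
  rw [Nat.card_congr (aux_main_equiv _ two)]
  set π := ZMod.castHom (dvd_pow_self p (by omega : n ≠ 0)) (ZMod p) with hπ
  set S := (Finset.univ.filter (fun a : ZMod p => a = 0 ∨ a ^ 2 = 1 ∨ a ^ 2 = -1)) with hS
  have hpred : ∀ t : ZMod (p ^ n),
      (IsUnit t ∧ IsUnit (1 - t ^ 2) ∧ IsUnit (1 + t ^ 2)) ↔ π t ∈ Sᶜ := by
    intro t
    rw [Finset.mem_compl, hS, Finset.mem_filter]
    rw [aux_unit_iff p hp n hn t, aux_unit_iff p hp n hn (1 - t ^ 2),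
      aux_unit_iff p hp n hn (1 + t ^ 2)]
    have e1 : π (1 - t ^ 2) = 1 - (π t) ^ 2 := by rw [map_sub, map_one, map_pow]
    have e2 : π (1 + t ^ 2) = 1 + (π t) ^ 2 := by rw [map_add, map_one, map_pow]
    rw [e1, e2]
    constructor
    · rintro ⟨h0, h1, h2⟩ ⟨_, hh⟩
      rcases hh with hh | hh | hh
      · exact h0 hh
      · exact h1 (by rw [hh]; ring)
      · exact h2 (by rw [hh]; ring)
    · intro h
      push_neg at h
      have h' := h (Finset.mem_univ _)
      refine ⟨h'.1, fun hc => h'.2.1 (by linear_combination -hc), fun hc => h'.2.2 (by linear_combination hc)⟩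
  rw [Nat.card_congr (Equiv.subtypeEquivRight hpred)]
  rw [aux_subset_count p hp n hn Sᶜ]
  rw [Finset.card_compl, ZMod.card, aux_S_card p hp hodd]
end

section
/- Let p be an odd prime, n ≥ 2 an integer, F1, F2 ∈ ℤ[X], and set G := F1'·F2 − F1·F2' ∈ ℤ[X]; assume G ≠ 0 and let r be the p-adic valuation of the content of G (the gcd of the coefficients of G). Let α ∈ ℤ with p ∤ F2(α), and assume r ≤ n − 2. Define S_α(f; p^n) := Σ_{x = 1, x ≡ α (mod p)}^{p^n} e^{2πi·v(x)/p^n}, where for each such x, v(x) ∈ {0,1,...,p^n−1} is the representative of F1(x)·F2(x)^{−1} in ℤ/p^nℤ (F2(x) is invertible mod p^n since p ∤ F2(α)). If p^{r+1} ∤ G(α), then S_α(f; p^n) = 0. -/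
open Polynomial Finset Finset.Nat


noncomputable def Wp (F1 F2 : Polynomial ℤ) (k : ℕ) : Polynomial ℤ :=
  hasseDeriv k F1 * F2 - F1 * hasseDeriv k F2

lemma hd_deriv (F1 : Polynomial ℤ) (a : ℕ) :
    hasseDeriv a (derivative F1) = ((a+1 : ℕ) : Polynomial ℤ) * hasseDeriv (a+1) F1 := by
  rw [← hasseDeriv_one']
  have := congrFun (congrArg DFunLike.coe (hasseDeriv_comp (R := ℤ) a 1)) F1
  simp only [LinearMap.coe_comp, Function.comp_apply, LinearMap.smul_apply] at this
  rw [this, Nat.choose_succ_self_right, nsmul_eq_mul]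

lemma key1 (F1 F2 : Polynomial ℤ) (j : ℕ) :
    hasseDeriv j (derivative F1 * F2 - F1 * derivative F2)
      = ∑ ik ∈ antidiagonal (j+1),
          (((ik.1 : ℕ) : Polynomial ℤ) - ((ik.2 : ℕ) : Polynomial ℤ)) *
            (hasseDeriv ik.1 F1 * hasseDeriv ik.2 F2) := by
  rw [map_sub, hasseDeriv_mul, hasseDeriv_mul]
  have h1 : ∑ ab ∈ antidiagonal j, hasseDeriv ab.1 (derivative F1) * hasseDeriv ab.2 F2
      = ∑ ik ∈ antidiagonal (j+1), ((ik.1 : ℕ) : Polynomial ℤ) *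
          (hasseDeriv ik.1 F1 * hasseDeriv ik.2 F2) := by
    rw [sum_antidiagonal_succ
      (f := fun ik => ((ik.1 : ℕ) : Polynomial ℤ) * (hasseDeriv ik.1 F1 * hasseDeriv ik.2 F2))]
    simp only [Nat.cast_zero, zero_mul, zero_add]
    exact Finset.sum_congr rfl fun ab _ => by rw [hd_deriv]; ring
  have h2 : ∑ ab ∈ antidiagonal j, hasseDeriv ab.1 F1 * hasseDeriv ab.2 (derivative F2)
      = ∑ ik ∈ antidiagonal (j+1), ((ik.2 : ℕ) : Polynomial ℤ) *
          (hasseDeriv ik.1 F1 * hasseDeriv ik.2 F2) := by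
    rw [sum_antidiagonal_succ'
      (f := fun ik => ((ik.2 : ℕ) : Polynomial ℤ) * (hasseDeriv ik.1 F1 * hasseDeriv ik.2 F2))]
    simp only [Nat.cast_zero, zero_mul, zero_add]
    exact Finset.sum_congr rfl fun ab _ => by rw [hd_deriv]; ring
  rw [h1, h2, ← Finset.sum_sub_distrib]
  exact Finset.sum_congr rfl fun ab _ => by ring

lemma key2 (F1 F2 : Polynomial ℤ) (j : ℕ) :
    F2 * hasseDeriv j (derivative F1 * F2 - F1 * derivative F2)
      = ∑ ik ∈ antidiagonal (j+1),
          (((ik.1 : ℕ) : Polynomial ℤ) - ((ik.2 : ℕ) : Polynomial ℤ)) *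
            (Wp F1 F2 ik.1 * hasseDeriv ik.2 F2) := by
  rw [key1, Finset.mul_sum]
  have hT : ∑ ik ∈ antidiagonal (j+1),
      (((ik.1 : ℕ) : Polynomial ℤ) - ((ik.2 : ℕ) : Polynomial ℤ)) *
        (hasseDeriv ik.1 F2 * hasseDeriv ik.2 F2) = 0 := by
    set T := ∑ ik ∈ antidiagonal (j+1),
      (((ik.1 : ℕ) : Polynomial ℤ) - ((ik.2 : ℕ) : Polynomial ℤ)) *
        (hasseDeriv ik.1 F2 * hasseDeriv ik.2 F2) with hTdef
    have hswap : T = -T := by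
      nth_rewrite 1 [hTdef]
      rw [← Finset.Nat.sum_antidiagonal_swap (f := fun ik =>
        (((ik.1 : ℕ) : Polynomial ℤ) - ((ik.2 : ℕ) : Polynomial ℤ)) *
          (hasseDeriv ik.1 F2 * hasseDeriv ik.2 F2))]
      rw [hTdef, ← Finset.sum_neg_distrib]
      exact Finset.sum_congr rfl fun ab _ => by simp [Prod.swap]; ring
    have h2 : T + T = 0 := by nth_rewrite 1 [hswap]; ring
    have := mul_eq_zero.mp (show (2 : Polynomial ℤ) * T = 0 by rw [two_mul]; exact h2)
    rcases this with h | h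
    · exact absurd h two_ne_zero
    · exact h
  calc ∑ ik ∈ antidiagonal (j+1), F2 * ((((ik.1:ℕ):Polynomial ℤ) - ((ik.2:ℕ):Polynomial ℤ)) *
            (hasseDeriv ik.1 F1 * hasseDeriv ik.2 F2))
      = (∑ ik ∈ antidiagonal (j+1), (((ik.1:ℕ):Polynomial ℤ) - ((ik.2:ℕ):Polynomial ℤ)) *
            (Wp F1 F2 ik.1 * hasseDeriv ik.2 F2))
        + (∑ ik ∈ antidiagonal (j+1), (((ik.1:ℕ):Polynomial ℤ) - ((ik.2:ℕ):Polynomial ℤ)) *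
            (F1 * hasseDeriv ik.1 F2 * hasseDeriv ik.2 F2)) := by
        rw [← Finset.sum_add_distrib]
        exact Finset.sum_congr rfl fun ab _ => by simp only [Wp]; ring
    _ = _ := by
        have : ∑ ik ∈ antidiagonal (j+1), (((ik.1:ℕ):Polynomial ℤ) - ((ik.2:ℕ):Polynomial ℤ)) *
            (F1 * hasseDeriv ik.1 F2 * hasseDeriv ik.2 F2)
            = F1 * ∑ ik ∈ antidiagonal (j+1), (((ik.1:ℕ):Polynomial ℤ) - ((ik.2:ℕ):Polynomial ℤ)) *
            (hasseDeriv ik.1 F2 * hasseDeriv ik.2 F2) := by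
          rw [Finset.mul_sum]
          exact Finset.sum_congr rfl fun ab _ => by ring
        rw [this, hT, mul_zero, add_zero]

lemma key3 (F1 F2 H : Polynomial ℤ) (c : ℤ)
    (hGH : derivative F1 * F2 - F1 * derivative F2 = C c * H) :
    ∀ k : ℕ, C c ∣ ((k.factorial : ℕ) : Polynomial ℤ) * (F2 ^ k * Wp F1 F2 k) := by
  intro k
  induction k using Nat.strong_induction_on with
  | _ k IH =>
    match k with
    | 0 => simp [Wp, hasseDeriv_zero]
    | (j+1) =>
      -- equation from key2
      have hsplit := key2 F1 F2 j
      rw [sum_antidiagonal_succ'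
        (f := fun ik => (((ik.1 : ℕ) : Polynomial ℤ) - ((ik.2 : ℕ) : Polynomial ℤ)) *
            (Wp F1 F2 ik.1 * hasseDeriv ik.2 F2)), hGH] at hsplit
      simp only [Nat.cast_zero, sub_zero, hasseDeriv_zero, LinearMap.id_coe, id_eq] at hsplit
      -- hsplit : F2 * hasseDeriv j (C c * H) = (j+1) * (Wp (j+1) * F2) + ∑ ...
      have hmain : (((j+1 : ℕ)) : Polynomial ℤ) * (Wp F1 F2 (j+1) * F2)
          = F2 * hasseDeriv j (C c * H)
            - ∑ ab ∈ antidiagonal j, (((ab.1 : ℕ) : Polynomial ℤ) - ((ab.2+1 : ℕ) : Polynomial ℤ)) *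
              (Wp F1 F2 ab.1 * hasseDeriv (ab.2+1) F2) := by
        rw [hsplit]; push_cast; ring
      -- target
      have hCH : C c ∣ hasseDeriv j (C c * H) := by
        have : C c * H = c • H := by rw [smul_eq_C_mul]
        rw [this, map_smul, smul_eq_C_mul]
        exact Dvd.intro _ rfl
      have hterm : ∀ ab ∈ antidiagonal j, C c ∣
          (((j.factorial : ℕ)) : Polynomial ℤ) * F2 ^ j *
            ((((ab.1 : ℕ) : Polynomial ℤ) - ((ab.2+1 : ℕ) : Polynomial ℤ)) *
              (Wp F1 F2 ab.1 * hasseDeriv (ab.2+1) F2)) := by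
        intro ab hab
        have hab' : ab.1 + ab.2 = j := Finset.HasAntidiagonal.mem_antidiagonal.mp hab
        have hle : ab.1 ≤ j := le_of_add_le_left hab'.le
        obtain ⟨m, hm⟩ := Nat.factorial_dvd_factorial hle
        obtain ⟨Q, hQ⟩ := IH ab.1 (Nat.lt_succ_of_le hle)
        refine ⟨(m : Polynomial ℤ) * F2 ^ (j - ab.1) *
          ((((ab.1 : ℕ) : Polynomial ℤ) - ((ab.2+1 : ℕ) : Polynomial ℤ)) * hasseDeriv (ab.2+1) F2) * Q, ?_⟩
        have hF2pow : F2 ^ j = F2 ^ ab.1 * F2 ^ (j - ab.1) := by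
          rw [← pow_add, Nat.add_sub_cancel' hle]
        calc ((j.factorial : ℕ) : Polynomial ℤ) * F2 ^ j *
              ((((ab.1 : ℕ) : Polynomial ℤ) - ((ab.2+1 : ℕ) : Polynomial ℤ)) *
                (Wp F1 F2 ab.1 * hasseDeriv (ab.2+1) F2))
            = (((ab.1.factorial : ℕ) : Polynomial ℤ) * (F2 ^ ab.1 * Wp F1 F2 ab.1)) *
              ((m : Polynomial ℤ) * F2 ^ (j - ab.1) *
                ((((ab.1 : ℕ) : Polynomial ℤ) - ((ab.2+1 : ℕ) : Polynomial ℤ)) * hasseDeriv (ab.2+1) F2)) := by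
              rw [hF2pow, hm]; push_cast; ring
          _ = _ := by rw [hQ]; ring
      have hsum : C c ∣ (((j.factorial : ℕ)) : Polynomial ℤ) * F2 ^ j *
          (F2 * hasseDeriv j (C c * H)
            - ∑ ab ∈ antidiagonal j, (((ab.1 : ℕ) : Polynomial ℤ) - ((ab.2+1 : ℕ) : Polynomial ℤ)) *
              (Wp F1 F2 ab.1 * hasseDeriv (ab.2+1) F2)) := by
        rw [mul_sub]
        refine dvd_sub (Dvd.dvd.mul_left ?_ _) ?_
        · exact hCH.mul_left _
        · rw [Finset.mul_sum]
          exact Finset.dvd_sum hterm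
      have hfinal : (((j+1).factorial : ℕ) : Polynomial ℤ) * (F2 ^ (j+1) * Wp F1 F2 (j+1))
          = (((j.factorial : ℕ)) : Polynomial ℤ) * F2 ^ j *
            ((((j+1 : ℕ)) : Polynomial ℤ) * (Wp F1 F2 (j+1) * F2)) := by
        rw [Nat.factorial_succ]; push_cast; ring
      rw [hfinal, hmain]
      exact hsum


-- cancel p-powers against a coprime factor
lemma cancel_pow (p : ℕ) (hp : p.Prime) (a b : ℕ) (m w : ℤ) (hm : ¬ (p:ℤ) ∣ m)
    (h : (p:ℤ)^a ∣ (p:ℤ)^b * (m * w)) : (p:ℤ)^(a-b) ∣ w := by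
  have hpI : Prime (p:ℤ) := Nat.prime_iff_prime_int.mp hp
  rcases le_or_gt a b with hab | hab
  · simpa [Nat.sub_eq_zero_of_le hab] using one_dvd w
  · have hb : b ≤ a := hab.le
    have : (p:ℤ)^b * (p:ℤ)^(a-b) ∣ (p:ℤ)^b * (m * w) := by
      rwa [← pow_add, Nat.add_sub_cancel' hb]
    have h2 : (p:ℤ)^(a-b) ∣ m * w :=
      (mul_dvd_mul_iff_left (pow_ne_zero b (Int.natCast_ne_zero.mpr hp.ne_zero))).mp this
    have hcop : IsCoprime ((p:ℤ)^(a-b)) m :=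
      (IsCoprime.pow_left ((hpI.coprime_iff_not_dvd).mpr hm))
    exact hcop.dvd_of_dvd_mul_left h2

-- padic valuation of factorial bound : v_p(k!) + 2 ≤ k for k ≥ 2, p odd prime
lemma val_fact_le (p : ℕ) (hp : p.Prime) (hodd : Odd p) (k : ℕ) (hk : 2 ≤ k) :
    padicValNat p (k.factorial) + 2 ≤ k := by
  haveI : Fact p.Prime := ⟨hp⟩
  have hp3 : 3 ≤ p := by
    rcases hp.eq_two_or_odd with h2 | _
    · exact absurd (h2 ▸ hodd) (by decide)
    · have := hp.two_le
      rcases Nat.lt_or_ge p 3 with h | h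
      · interval_cases p
        · exact absurd hodd (by decide)
      · exact h
  set v := padicValNat p (k.factorial) with hv
  have hleg : (p - 1) * v = k - (p.digits k).sum := sub_one_mul_padicValNat_factorial k
  have hds : 1 ≤ (p.digits k).sum := by
    by_contra hcon
    push_neg at hcon
    have h0 : (p.digits k).sum = 0 := Nat.lt_one_iff.mp hcon
    have : ∀ x ∈ p.digits k, x = 0 := List.sum_eq_zero_iff.mp h0
    have hk0 : k ≠ 0 := by omega
    have hne : p.digits k ≠ [] := Nat.digits_ne_nil_iff_ne_zero.mpr hk0
    have := Nat.getLast_digit_ne_zero p hk0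
    exact this (‹∀ x ∈ p.digits k, x = 0› _ (List.getLast_mem hne))
  have hsum_le : (p.digits k).sum ≤ k := Nat.digit_sum_le p k
  have h2v : 2 * v ≤ k - 1 := by
    have : 2 * v ≤ (p - 1) * v := Nat.mul_le_mul_right v (by omega)
    omega
  omega

lemma key4 (p : ℕ) (hp : p.Prime) (hodd : Odd p) (r s : ℕ) (hs : 1 ≤ s)
    (F1 F2 H : Polynomial ℤ)
    (hGH : derivative F1 * F2 - F1 * derivative F2 = C ((p:ℤ)^r) * H)
    (y : ℤ) (hF2y : ¬ (p:ℤ) ∣ F2.eval y) (k : ℕ) (hk : 2 ≤ k) :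
    (p:ℤ)^(r+1+s) ∣ (p:ℤ)^(s*k) * (Wp F1 F2 k).eval y := by
  haveI : Fact p.Prime := ⟨hp⟩
  rcases le_or_gt (r+1+s) (s*k) with hle | hlt
  · exact dvd_mul_of_dvd_left (pow_dvd_pow _ hle) _
  · set v := padicValNat p (k.factorial) with hv
    have hvk : v + 2 ≤ k := val_fact_le p hp hodd k hk
    -- arithmetic
    obtain ⟨k', rfl⟩ : ∃ k', k = k' + 2 := ⟨k-2, by omega⟩
    have hq1 : s * (k'+2) = s * (k'+1) + s := by ring
    have hq2 : k' + 1 ≤ s * (k'+1) := Nat.le_mul_of_pos_left _ (by omega)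
    have hvr : v + 1 ≤ s * (k'+1) := by omega
    have hvltr : v < r := by omega
    have hexp : r + 1 + s ≤ s * (k'+2) + (r - v) := by omega
    -- divisibility of w
    have hdvd := Polynomial.eval_dvd (x := y) (key3 F1 F2 H ((p:ℤ)^r) hGH (k'+2))
    simp only [eval_C, eval_mul, eval_natCast, eval_pow] at hdvd
    -- k! = p^v * m
    obtain ⟨m, hm⟩ : ∃ m, (k'+2).factorial = p ^ v * m :=
      (pow_padicValNat_dvd : p ^ v ∣ (k'+2).factorial)
    have hpm : ¬ p ∣ m := by
      intro hcon
      obtain ⟨m', rfl⟩ := hcon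
      have : p ^ (v+1) ∣ (k'+2).factorial := ⟨m', by rw [hm]; ring⟩
      exact pow_succ_padicValNat_not_dvd (Nat.factorial_ne_zero _) this
    have hw : (p:ℤ)^(r-v) ∣ (Wp F1 F2 (k'+2)).eval y := by
      apply cancel_pow p hp r v ((m:ℤ) * F2.eval y ^ (k'+2)) _ ?_ ?_
      · intro hcon
        rcases (Nat.prime_iff_prime_int.mp hp).dvd_mul.mp hcon with h | h
        · exact hpm (Int.ofNat_dvd.mp h)
        · exact hF2y ((Nat.prime_iff_prime_int.mp hp).dvd_of_dvd_pow h)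
      · have : ((k'+2).factorial : ℤ) = (p:ℤ)^v * (m:ℤ) := by exact_mod_cast congrArg (Nat.cast : ℕ → ℤ) hm
        rw [this] at hdvd
        calc (p:ℤ)^r ∣ (p:ℤ)^v * (m:ℤ) * (F2.eval y ^ (k'+2) * (Wp F1 F2 (k'+2)).eval y) := hdvd
          _ = (p:ℤ)^v * ((m:ℤ) * F2.eval y ^ (k'+2) * (Wp F1 F2 (k'+2)).eval y) := by ring
    obtain ⟨w', hw'⟩ := hw
    rw [hw']
    have heq : (p:ℤ)^(s*(k'+2)) * ((p:ℤ)^(r-v) * w') = (p:ℤ)^(s*(k'+2) + (r-v)) * w' := by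
      rw [pow_add]; ring
    rw [heq]
    exact Dvd.dvd.mul_right (pow_dvd_pow _ hexp) w'



lemma key5 (p : ℕ) (hp : p.Prime) (hodd : Odd p) (r s : ℕ) (hs : 1 ≤ s)
    (F1 F2 G0 : Polynomial ℤ)
    (hGH : derivative F1 * F2 - F1 * derivative F2 = C ((p:ℤ)^r) * G0)
    (y z : ℤ) (hF2y : ¬ (p:ℤ) ∣ F2.eval y) :
    (p:ℤ)^(r+1+s) ∣ (F1.eval (y + (p:ℤ)^s * z) * (F2.eval y)^2
      - F1.eval y * F2.eval y * F2.eval (y + (p:ℤ)^s * z)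
      - (p:ℤ)^(r+s) * z * G0.eval y * F2.eval (y + (p:ℤ)^s * z)) := by
  set u : ℤ := (p:ℤ)^s * z with hu
  set M : ℕ := max F1.natDegree F2.natDegree + 1 with hM
  set a : ℕ → ℤ := fun k => (hasseDeriv k F1).eval y with ha
  set b : ℕ → ℤ := fun k => (hasseDeriv k F2).eval y with hb
  set w : ℕ → ℤ := fun k => (Wp F1 F2 k).eval y with hw
  have hwab : ∀ k, w k = a k * b 0 - a 0 * b k := by
    intro k
    simp [hw, Wp, ha, hb, hasseDeriv_zero]
  have hexp : ∀ (F : Polynomial ℤ), F.natDegree < M + 1 →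
      F.eval (y + u) = ∑ k ∈ range (M+1), (hasseDeriv k F).eval y * u^k := by
    intro F hF
    rw [show y + u = u + y by ring, ← taylor_eval,
      eval_eq_sum_range' (n := M+1) (by rwa [natDegree_taylor])]
    exact Finset.sum_congr rfl fun k _ => by rw [taylor_coeff]
  have EF1 : F1.eval (y + u) = ∑ k ∈ range (M+1), a k * u^k :=
    hexp F1 (by omega)
  have EF2 : F2.eval (y + u) = ∑ k ∈ range (M+1), b k * u^k :=
    hexp F2 (by omega)
  have ha0 : F1.eval y = a 0 := by simp [ha, hasseDeriv_zero]
  have hb0 : F2.eval y = b 0 := by simp [hb, hasseDeriv_zero]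
  set P : ℤ := (p:ℤ)^(r+s) with hP
  set g : ℤ := G0.eval y with hg
  set f : ℕ → ℤ := fun k => b 0 * w k * u^k - P * z * g * (b k * u^k) with hf
  have step1 : F1.eval (y + u) * (F2.eval y)^2
      - F1.eval y * F2.eval y * F2.eval (y + u)
      - P * z * g * F2.eval (y + u)
      = ∑ k ∈ range (M+1), f k := by
    rw [EF1, EF2, ha0, hb0, Finset.sum_mul, Finset.mul_sum, Finset.mul_sum,
      ← Finset.sum_sub_distrib, ← Finset.sum_sub_distrib]
    refine Finset.sum_congr rfl fun k _ => ?_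
    rw [hf]; simp only []
    rw [hwab k]; ring
  rw [step1]
  -- peel two terms
  obtain ⟨M', hM'⟩ : ∃ M', M = M' + 1 := ⟨max F1.natDegree F2.natDegree, rfl⟩
  rw [hM', Finset.sum_range_succ' f (M'+1), Finset.sum_range_succ' (fun k => f (k+1)) M']
  have hw0 : w 0 = 0 := by simp [hw, Wp, hasseDeriv_zero]
  have hw1 : w 1 = (p:ℤ)^r * g := by
    simp only [hw, Wp, hasseDeriv_one]
    rw [show derivative F1 * F2 - F1 * derivative F2 = C ((p:ℤ)^r) * G0 from hGH]
    simp [hg]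
  have hf10 : f 1 + f 0 = -(P * z * g * (b 1 * u)) := by
    simp only [hf, hw0, hw1]
    rw [hP, pow_add, hu]; ring
  have hd1 : (p:ℤ)^(r+1+s) ∣ f 1 + f 0 := by
    rw [hf10, hP, hu]
    have : (p:ℤ)^(r+s) * z * g * (b 1 * ((p:ℤ)^s * z)) =
        (p:ℤ)^(r+s+s) * (z * g * (b 1 * z)) := by rw [pow_add]; ring
    rw [this]
    exact (dvd_neg).mpr (Dvd.dvd.mul_right (pow_dvd_pow _ (by omega)) _)
  have hd2 : ∀ k ∈ range M', (p:ℤ)^(r+1+s) ∣ f (k+1+1) := by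
    intro k _
    rw [hf]; simp only []
    refine dvd_sub ?_ ?_
    · have hup : u^(k+2) = (p:ℤ)^(s*(k+2)) * z^(k+2) := by
        rw [hu, mul_pow, ← pow_mul]
      rw [hup]
      have := key4 p hp hodd r s hs F1 F2 G0 hGH y hF2y (k+2) (by omega)
      calc (p:ℤ)^(r+1+s) ∣ (p:ℤ)^(s*(k+2)) * w (k+2) := this
        _ ∣ b 0 * w (k+2) * ((p:ℤ)^(s*(k+2)) * z^(k+2)) := ⟨b 0 * z^(k+2), by ring⟩
    · have hup : u^(k+2) = (p:ℤ)^(s*(k+2)) * z^(k+2) := by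
        rw [hu, mul_pow, ← pow_mul]
      rw [hup, hP]
      have : (p:ℤ)^(r+s) * z * g * (b (k+2) * ((p:ℤ)^(s*(k+2)) * z^(k+2)))
          = (p:ℤ)^(r+s+s*(k+2)) * (z * g * (b (k+2) * z^(k+2))) := by rw [pow_add]; ring
      rw [this]
      refine Dvd.dvd.mul_right (pow_dvd_pow _ ?_) _
      have : 1*2 ≤ s*(k+2) := Nat.mul_le_mul hs (by omega)
      omega
  rw [add_assoc (∑ k ∈ range M', f (k+1+1)) (f (0+1)) (f 0)]
  refine dvd_add (Finset.dvd_sum hd2) ?_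
  simpa using hd1


-- unit lemma
lemma unit_of_not_dvd (p : ℕ) (hp : p.Prime) (N : ℕ) (c : ℤ) (hc : ¬ (p:ℤ) ∣ c) :
    IsUnit ((c : ZMod (p^N))) := by
  have h1 : ¬ p ∣ c.natAbs := fun h => hc (Int.dvd_natAbs.mp (Int.natCast_dvd_natCast.mpr h))
  have h2 : Nat.Coprime c.natAbs (p^N) :=
    Nat.Coprime.pow_right N (Nat.coprime_comm.mp ((Nat.Prime.coprime_iff_not_dvd hp).mpr h1))
  have h3 : IsUnit ((c.natAbs : ZMod (p^N))) := (ZMod.isUnit_iff_coprime _ _).mpr h2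
  rcases Int.natAbs_eq c with h | h
  · rw [h, Int.cast_natCast]; exact h3
  · rw [h, Int.cast_neg, Int.cast_natCast]; exact h3.neg

-- key6 : ZMod identity
lemma key6 (N : ℕ) (a1 a2 b1 b2 g P z : ℤ)
    (hE : (N:ℤ) ∣ (a1*b2^2 - b1*b2*a2 - P*z*g*a2))
    (hu2 : IsUnit ((a2 : ZMod N))) (hv2 : IsUnit ((b2 : ZMod N))) :
    (a1 : ZMod N) * (a2 : ZMod N)⁻¹
      = (b1 : ZMod N)*(b2:ZMod N)⁻¹ + (P:ZMod N)*(z:ZMod N)*(g:ZMod N)*((b2:ZMod N)⁻¹)^2 := by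
  have h1 : (a2 : ZMod N) * (a2 : ZMod N)⁻¹ = 1 := ZMod.mul_inv_of_unit _ hu2
  have h2 : (b2 : ZMod N) * (b2 : ZMod N)⁻¹ = 1 := ZMod.mul_inv_of_unit _ hv2
  have hcast : (a1:ZMod N)*(b2:ZMod N)^2
      = (b1:ZMod N)*(b2:ZMod N)*(a2:ZMod N) + (P:ZMod N)*(z:ZMod N)*(g:ZMod N)*(a2:ZMod N) := by
    have h0 : ((a1*b2^2 - b1*b2*a2 - P*z*g*a2 : ℤ) : ZMod N) = 0 :=
      (ZMod.intCast_zmod_eq_zero_iff_dvd _ _).mpr hE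
    push_cast at h0
    linear_combination h0
  have hU : IsUnit ((a2 : ZMod N) * (b2 : ZMod N)^2) := hu2.mul (hv2.pow 2)
  apply hU.mul_left_cancel
  linear_combination hcast + ((a1:ZMod N)*(b2:ZMod N)^2) * h1
    - ((b1:ZMod N)*(b2:ZMod N)*(a2:ZMod N)) * h2
    - ((P:ZMod N)*(z:ZMod N)*(g:ZMod N)*(a2:ZMod N)*((b2:ZMod N)*((b2:ZMod N))⁻¹+1)) * h2

-- sum splitting
lemma sum_split (T K N : ℕ) (hT : 0 < T) (hTK : T * K = N) (f : ℕ → ℂ) :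
    ∑ x ∈ range N, f x = ∑ y ∈ range T, ∑ z ∈ range K, f (y + T*z) := by
  subst hTK
  rw [← Finset.sum_product']
  refine Finset.sum_nbij' (fun x => (x % T, x / T)) (fun q => q.1 + T * q.2) ?_ ?_ ?_ ?_ ?_
  · intro x hx
    rw [Finset.mem_range] at hx
    rw [Finset.mem_product, Finset.mem_range, Finset.mem_range]
    exact ⟨Nat.mod_lt x hT, Nat.div_lt_iff_lt_mul hT |>.mpr (by rwa [mul_comm])⟩
  · intro q hq
    rw [Finset.mem_product, Finset.mem_range, Finset.mem_range] at hq
    rw [Finset.mem_range]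
    have h1 : q.1 + T * q.2 < T * (q.2 + 1) := by
      have : T * (q.2 + 1) = T * q.2 + T := by ring
      omega
    exact lt_of_lt_of_le h1 (Nat.mul_le_mul_left T hq.2)
  · intro x _
    simp [Nat.mod_add_div]
  · intro q hq
    rw [Finset.mem_product, Finset.mem_range, Finset.mem_range] at hq
    have h1 : (q.1 + T * q.2) % T = q.1 := by
      rw [Nat.add_mul_mod_self_left, Nat.mod_eq_of_lt hq.1]
    have h2 : (q.1 + T * q.2) / T = q.2 := by
      rw [Nat.add_mul_div_left _ _ hT, Nat.div_eq_of_lt hq.1, zero_add]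
    exact Prod.ext h1 h2
  · intro x _
    rw [Nat.mod_add_div]

theorem stmt_10 (p : ℕ) (hp : p.Prime) (hodd : Odd p) (n : ℕ) (hn : 2 ≤ n)
    (F1 F2 G : Polynomial ℤ)
    (hG : G = Polynomial.derivative F1 * F2 - F1 * Polynomial.derivative F2)
    (hG0 : G ≠ 0) (r : ℕ) (hr : r = padicValInt p G.content)
    (α : ℤ) (hF2 : ¬ (p : ℤ) ∣ F2.eval α) (hrn : r ≤ n - 2)
    (hroot : ¬ (p : ℤ) ^ (r + 1) ∣ G.eval α) :
    (∑ x ∈ Finset.range (p ^ n),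
      if ((x : ZMod p) = (α : ZMod p)) then
        Complex.exp (2 * Real.pi * Complex.I *
          ((Polynomial.aeval (x : ZMod (p ^ n)) F1 *
            (Polynomial.aeval (x : ZMod (p ^ n)) F2)⁻¹).val : ℂ) / (p : ℂ) ^ n)
      else 0) = 0 := by
  classical
  haveI instF : Fact p.Prime := ⟨hp⟩
  haveI : NeZero (p^n) := ⟨(pow_pos hp.pos n).ne'⟩
  obtain ⟨s, hs1, hsn⟩ : ∃ s, 1 ≤ s ∧ r + 1 + s = n := ⟨n - r - 1, by omega, by omega⟩
  -- extract G0
  have hcont : (p:ℤ)^r ∣ G.content := by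
    have h1 : p ^ r ∣ G.content.natAbs := by
      rw [hr, padicValInt]; exact pow_padicValNat_dvd
    have h2 : ((p:ℤ))^r ∣ (G.content.natAbs : ℤ) := by exact_mod_cast Int.natCast_dvd_natCast.mpr h1
    exact Int.dvd_natAbs.mp h2
  obtain ⟨G0, hGG0⟩ : C ((p:ℤ)^r) ∣ G :=
    (C_dvd_iff_dvd_coeff _ _).mpr fun i => hcont.trans (content_dvd_coeff i)
  have hGH : derivative F1 * F2 - F1 * derivative F2 = C ((p:ℤ)^r) * G0 := by rw [← hG]; exact hGG0
  have hG0α : ¬ (p:ℤ) ∣ G0.eval α := by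
    rintro ⟨d, hd⟩
    refine hroot ⟨d, ?_⟩
    rw [hGG0]; simp only [eval_mul, eval_C]
    rw [hd, pow_succ]; ring
  -- bridge to stdAddChar
  have hbridge : ∀ q : ZMod (p^n),
      Complex.exp (2 * Real.pi * Complex.I * ((q.val : ℕ) : ℂ) / (p:ℂ)^n)
        = ZMod.stdAddChar q := by
    intro q
    rw [ZMod.stdAddChar_apply, ZMod.toCircle_apply]
    norm_cast
  simp_rw [hbridge]
  rw [sum_split (p^s) (p^(r+1)) (p^n) (pow_pos hp.pos s) (by rw [← pow_add]; congr 1; omega)]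
  refine Finset.sum_eq_zero fun y hy => ?_
  have hs0 : s ≠ 0 := by omega
  have hcast_cond : ∀ z : ℕ, (((y + p^s*z : ℕ) : ZMod p)) = ((y:ℕ) : ZMod p) := by
    intro z
    push_cast
    rw [ZMod.natCast_self, zero_pow hs0, zero_mul, add_zero]
  by_cases hcond : (((y:ℕ) : ZMod p) = ((α : ℤ) : ZMod p))
  case neg =>
    refine Finset.sum_eq_zero fun z hz => ?_
    rw [if_neg (fun hcon => hcond ((hcast_cond z).symm.trans hcon))]
  case pos =>
    -- congruence facts
    have hyd : (p:ℤ) ∣ ((y:ℤ) - α) := by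
      have h0 : (((y:ℤ)) : ZMod p) = ((α : ℤ) : ZMod p) := by
        rw [Int.cast_natCast]; exact hcond
      exact Int.ModEq.dvd (((ZMod.intCast_eq_intCast_iff _ _ _).mp h0).symm)
    have hnd : ∀ (u v : ℤ), (p:ℤ) ∣ (u - v) → ∀ Q : Polynomial ℤ,
        ¬ (p:ℤ) ∣ Q.eval v → ¬ (p:ℤ) ∣ Q.eval u := by
      intro u v huv Q hQ hcon
      apply hQ
      have h2 : (p:ℤ) ∣ (Q.eval u - Q.eval v) := huv.trans (sub_dvd_eval_sub _ _ Q)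
      have := dvd_sub hcon h2
      simpa using this
    have hF2y : ¬ (p:ℤ) ∣ F2.eval (y:ℤ) := hnd _ _ hyd F2 hF2
    have hG0y : ¬ (p:ℤ) ∣ G0.eval (y:ℤ) := hnd _ _ hyd G0 hG0α
    have hv2 : IsUnit ((F2.eval (y:ℤ) : ℤ) : ZMod (p^n)) := unit_of_not_dvd p hp n _ hF2y
    set ψ : AddChar (ZMod (p^n)) ℂ := ZMod.stdAddChar with hψ
    set A : ZMod (p^n) := ((F1.eval (y:ℤ) : ℤ) : ZMod (p^n)) * ((F2.eval (y:ℤ) : ℤ) : ZMod (p^n))⁻¹ with hA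
    set c : ZMod (p^n) := (((p:ℤ)^(r+s) * G0.eval (y:ℤ) : ℤ) : ZMod (p^n)) *
      (((F2.eval (y:ℤ) : ℤ) : ZMod (p^n))⁻¹)^2 with hc
    have hterm : ∀ z ∈ range (p^(r+1)),
        (if (((y + p^s*z : ℕ) : ZMod p) = ((α:ℤ) : ZMod p)) then
          ψ (Polynomial.aeval ((y + p^s*z : ℕ) : ZMod (p^n)) F1 *
            (Polynomial.aeval ((y + p^s*z : ℕ) : ZMod (p^n)) F2)⁻¹) else 0)
        = ψ A * (ψ c)^z := by
      intro z hz
      rw [if_pos ((hcast_cond z).trans hcond)]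
      have hxint : ((y + p^s*z : ℕ) : ℤ) = (y:ℤ) + (p:ℤ)^s * (z:ℤ) := by push_cast; ring
      have haev : ∀ Q : Polynomial ℤ, Polynomial.aeval (((y + p^s*z : ℕ)) : ZMod (p^n)) Q
          = ((Q.eval ((y:ℤ) + (p:ℤ)^s * (z:ℤ)) : ℤ) : ZMod (p^n)) := by
        intro Q
        have h1 : (((y + p^s*z : ℕ)) : ZMod (p^n))
            = ((((y:ℤ) + (p:ℤ)^s * (z:ℤ)) : ℤ) : ZMod (p^n)) := by
          rw [← hxint]; push_cast; ring
        rw [h1, Polynomial.aeval_def, algebraMap_int_eq]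
        simp only [Polynomial.eval₂_at_intCast, eq_intCast, Int.cast_id]
      -- x-value facts
      have hxd : (p:ℤ) ∣ (((y:ℤ) + (p:ℤ)^s * (z:ℤ)) - (y:ℤ)) := by
        refine ⟨(p:ℤ)^(s-1) * z, ?_⟩
        have : (p:ℤ)^s = (p:ℤ) * (p:ℤ)^(s-1) := by
          rw [← pow_succ']
          congr 1
          omega
        rw [this]; ring
      have hF2x : ¬ (p:ℤ) ∣ F2.eval ((y:ℤ) + (p:ℤ)^s * (z:ℤ)) := hnd _ _ hxd F2 hF2y
      have hu2 : IsUnit ((F2.eval ((y:ℤ) + (p:ℤ)^s * (z:ℤ)) : ℤ) : ZMod (p^n)) :=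
        unit_of_not_dvd p hp n _ hF2x
      have hE0 := key5 p hp hodd r s hs1 F1 F2 G0 hGH (y:ℤ) (z:ℤ) hF2y
      have hND : ((p^n : ℕ) : ℤ) ∣ (F1.eval ((y:ℤ) + (p:ℤ)^s * (z:ℤ)) * (F2.eval (y:ℤ))^2
          - F1.eval (y:ℤ) * F2.eval (y:ℤ) * F2.eval ((y:ℤ) + (p:ℤ)^s * (z:ℤ))
          - (p:ℤ)^(r+s) * (z:ℤ) * G0.eval (y:ℤ) * F2.eval ((y:ℤ) + (p:ℤ)^s * (z:ℤ))) := by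
        push_cast
        rw [← hsn]
        exact hE0
      have hkey6 := key6 (p^n) (F1.eval ((y:ℤ) + (p:ℤ)^s * (z:ℤ)))
        (F2.eval ((y:ℤ) + (p:ℤ)^s * (z:ℤ))) (F1.eval (y:ℤ)) (F2.eval (y:ℤ))
        (G0.eval (y:ℤ)) ((p:ℤ)^(r+s)) (z:ℤ) hND hu2 hv2
      rw [haev F1, haev F2, hkey6]
      have hsum : ((((p:ℤ)^(r+s) : ℤ)) : ZMod (p^n)) * (((z:ℤ) : ℤ) : ZMod (p^n)) *
          ((G0.eval (y:ℤ) : ℤ) : ZMod (p^n)) * ((((F2.eval (y:ℤ) : ℤ) : ZMod (p^n)))⁻¹)^2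
          = z • c := by
        rw [nsmul_eq_mul, hc]
        push_cast
        ring
      rw [hsum, AddChar.map_add_eq_mul, AddChar.map_nsmul_eq_pow]
    rw [Finset.sum_congr rfl hterm, ← Finset.mul_sum]
    have hgeo : ∑ z ∈ range (p^(r+1)), (ψ c)^z = 0 := by
      have hcK : (ψ c)^(p^(r+1)) = 1 := by
        rw [← AddChar.map_nsmul_eq_pow, nsmul_eq_mul]
        have hzero : ((p^(r+1) : ℕ) : ZMod (p^n)) * c = 0 := by
          rw [hc, ← mul_assoc]
          have h9 : ((p^(r+1) : ℕ) : ZMod (p^n)) * (((p:ℤ)^(r+s) * G0.eval (y:ℤ) : ℤ) : ZMod (p^n))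
              = (((p:ℤ)^(r+1) * ((p:ℤ)^(r+s) * G0.eval (y:ℤ)) : ℤ) : ZMod (p^n)) := by
            push_cast; ring
          rw [h9, (ZMod.intCast_zmod_eq_zero_iff_dvd _ _).mpr ?_, zero_mul]
          push_cast
          have : (p:ℤ)^(r+1) * ((p:ℤ)^(r+s) * G0.eval (y:ℤ))
              = (p:ℤ)^(r+1+(r+s)) * G0.eval (y:ℤ) := by rw [pow_add]; ring
          rw [this]
          exact Dvd.dvd.mul_right (pow_dvd_pow _ (by omega)) _
        rw [hzero, AddChar.map_zero_eq_one]
      have hc1 : ψ c ≠ 1 := by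
        intro hcon
        have h0 : c = 0 := by
          apply ZMod.injective_stdAddChar (N := p^n)
          rw [show ZMod.stdAddChar c = ψ c from rfl, hcon, AddChar.map_zero_eq_one]
        have hinv : IsUnit (((F2.eval (y:ℤ) : ℤ) : ZMod (p^n))⁻¹) :=
          IsUnit.of_mul_eq_one _ (ZMod.inv_mul_of_unit _ hv2)
        have hgu : IsUnit ((G0.eval (y:ℤ) : ℤ) : ZMod (p^n)) := unit_of_not_dvd p hp n _ hG0y
        have hsplit : ((((p:ℤ)^(r+s) : ℤ)) : ZMod (p^n)) *
            (((G0.eval (y:ℤ) : ℤ) : ZMod (p^n)) * ((((F2.eval (y:ℤ) : ℤ) : ZMod (p^n)))⁻¹)^2) = 0 := by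
          rw [← h0, hc]
          push_cast
          ring
        have hU : IsUnit (((G0.eval (y:ℤ) : ℤ) : ZMod (p^n)) *
            ((((F2.eval (y:ℤ) : ℤ) : ZMod (p^n)))⁻¹)^2) := hgu.mul (hinv.pow 2)
        have hP0 : ((((p:ℤ)^(r+s) : ℤ)) : ZMod (p^n)) = 0 := (hU.mul_left_eq_zero).mp hsplit
        have hdvd : ((p^n : ℕ) : ℤ) ∣ (p:ℤ)^(r+s) := (ZMod.intCast_zmod_eq_zero_iff_dvd _ _).mp hP0
        have hnat : p^n ∣ p^(r+s) := by exact_mod_cast hdvd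
        have := (Nat.pow_dvd_pow_iff_le_right hp.one_lt).mp hnat
        omega
      rw [geom_sum_eq hc1, hcK]
      simp
    rw [hgeo, mul_zero]
end

section
/- Let p be a prime and Φ : ℝ → ℝ a Schwartz function. Then Σ_{x ∈ ℤ, p ∤ x} Φ(x/N) − ((p−1)/p)·Φ̂(0)·N tends to 0 as N → ∞ (N real). -/
open MeasureTheory Filter Real Complex FourierTransform Asymptotics

noncomputable def cpx (Φ : SchwartzMap ℝ ℝ) : SchwartzMap ℝ ℂ where
  toFun x := (Φ x : ℂ)
  smooth' := Complex.ofRealCLM.contDiff.comp (Φ.smooth ⊤)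
  decay' := by
    intro k n
    obtain ⟨C, hC⟩ := Φ.decay' k n
    refine ⟨C, fun x => ?_⟩
    have h : (fun x : ℝ => ((Φ x : ℝ) : ℂ)) = Complex.ofRealLI ∘ Φ := rfl
    rw [h, Complex.ofRealLI.norm_iteratedFDeriv_comp_left (Φ.smooth ⊤).contDiffAt (by exact_mod_cast le_top)]
    exact hC x

@[simp] lemma cpx_apply (Φ : SchwartzMap ℝ ℝ) (x : ℝ) : cpx Φ x = (Φ x : ℂ) := rfl

lemma fourier_scale (f : ℝ → ℂ) {N : ℝ} (hN : 0 < N) (ξ : ℝ) :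
    𝓕 (fun x => f (x / N)) ξ = (N : ℂ) * 𝓕 f (N * ξ) := by
  rw [Real.fourier_real_eq, Real.fourier_real_eq]
  have h : ∀ x : ℝ, 𝐞 (-(x * ξ)) • f (x / N)
      = (fun y : ℝ => 𝐞 (-(y * (N * ξ))) • f y) (x / N) := by
    intro x
    have : x / N * (N * ξ) = x * ξ := by field_simp
    simp [this]
  calc ∫ x : ℝ, 𝐞 (-(x * ξ)) • f (x / N)
      = ∫ x : ℝ, (fun y : ℝ => 𝐞 (-(y * (N * ξ))) • f y) (x / N) := by
        simp_rw [h]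
    _ = |N| • ∫ y : ℝ, 𝐞 (-(y * (N * ξ))) • f y :=
        MeasureTheory.Measure.integral_comp_div (fun y : ℝ => 𝐞 (-(y * (N * ξ))) • f y) N
    _ = (N : ℂ) * ∫ y : ℝ, 𝐞 (-(y * (N * ξ))) • f y := by
        rw [abs_of_pos hN, ← Complex.real_smul]

lemma comp_mul_O {f : ℝ → ℂ} (hf : f =O[cocompact ℝ] (fun x => |x| ^ (-2 : ℝ)))
    {a : ℝ} (ha : a ≠ 0) :
    (fun x => f (a * x)) =O[cocompact ℝ] (fun x => |x| ^ (-2 : ℝ)) := by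
  have h1 : Tendsto (fun x : ℝ => a * x) (cocompact ℝ) (cocompact ℝ) := by
    have := (Homeomorph.mulLeft₀ a ha).map_cocompact
    exact this.le
  have h2 := hf.comp_tendsto h1
  have h3 : ∀ x : ℝ, |a * x| ^ (-2 : ℝ) = |a| ^ (-2 : ℝ) * |x| ^ (-2 : ℝ) := fun x => by
    rw [abs_mul, Real.mul_rpow (abs_nonneg a) (abs_nonneg x)]
  refine h2.trans (Asymptotics.IsBigO.of_bound (|a| ^ (-2 : ℝ)) ?_)
  filter_upwards with x
  simp only [Function.comp_apply]
  rw [Real.norm_of_nonneg (Real.rpow_nonneg (abs_nonneg _) _),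
    Real.norm_of_nonneg (Real.rpow_nonneg (abs_nonneg _) _), h3]

lemma key (Φ : SchwartzMap ℝ ℝ) :
    Tendsto (fun N : ℝ => (∑' x : ℤ, Φ ((x : ℝ) / N)) - (∫ x : ℝ, Φ x) * N)
      atTop (nhds 0) := by
  classical
  set G : SchwartzMap ℝ ℂ := SchwartzMap.fourierTransformCLM ℂ (cpx Φ) with hGdef
  obtain ⟨C, hCpos, hC⟩ := G.decay 2 0
  have hC' : ∀ x : ℝ, ‖x‖ ^ 2 * ‖G x‖ ≤ C := by
    intro x; have := hC x; rwa [norm_iteratedFDeriv_zero] at this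
  have hsum2 : Summable (fun m : ℤ => 1 / (m : ℝ) ^ 2) := summable_one_div_int_pow.mpr one_lt_two
  set s : Set ℤ := {0} with hs
  set K : ℝ := ∑' m : ↥sᶜ, C / ((m : ℤ) : ℝ) ^ 2 with hK
  have hKsum : Summable (fun m : ↥sᶜ => C / ((m : ℤ) : ℝ) ^ 2) := by
    have := (hsum2.mul_left C).subtype sᶜ
    simp only [Function.comp_def, mul_one_div] at this
    exact this
  -- pointwise decay bound
  have hbound : ∀ (N : ℝ), 0 < N → ∀ m : ℤ, m ≠ 0 →
      ‖G (N * m)‖ ≤ N⁻¹ * (C / (m : ℝ) ^ 2) * N⁻¹ := by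
    intro N hN m hm
    have hmR : ((m : ℝ)) ≠ 0 := Int.cast_ne_zero.mpr hm
    have hne : N * (m : ℝ) ≠ 0 := mul_ne_zero hN.ne' hmR
    have hpos : (0 : ℝ) < ‖N * (m : ℝ)‖ ^ 2 :=
      pow_pos (norm_pos_iff.mpr hne) 2
    have := hC' (N * (m : ℝ))
    have h2 : ‖G (N * (m : ℝ))‖ ≤ C / ‖N * (m : ℝ)‖ ^ 2 := by
      rw [le_div_iff₀ hpos]; linarith [this]
    refine h2.trans (le_of_eq ?_)
    rw [Real.norm_eq_abs, _root_.sq_abs, mul_pow, div_eq_mul_inv, div_eq_mul_inv, mul_inv]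
    ring
  -- estimate for each N > 0
  have est : ∀ N : ℝ, 0 < N →
      ‖(∑' x : ℤ, Φ ((x : ℝ) / N)) - (∫ x : ℝ, Φ x) * N‖ ≤ N⁻¹ * K := by
    intro N hN
    -- the scaled function
    set f : ℝ → ℂ := fun x => cpx Φ (x / N) with hf'
    have hfc : Continuous f := (cpx Φ).continuous.comp (continuous_id.div_const N)
    have hO : ⇑(cpx Φ) =O[cocompact ℝ] fun x : ℝ => |x| ^ (-2 : ℝ) := by
      simpa [Real.norm_eq_abs] using (cpx Φ).isBigO_cocompact_rpow (-2)
    have hGO : ⇑G =O[cocompact ℝ] fun x : ℝ => |x| ^ (-2 : ℝ) := by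
      simpa [Real.norm_eq_abs] using G.isBigO_cocompact_rpow (-2)
    have hfO : f =O[cocompact ℝ] fun x : ℝ => |x| ^ (-2 : ℝ) := by
      have := comp_mul_O hO (inv_ne_zero hN.ne')
      simpa [hf', div_eq_inv_mul] using this
    have hFscale : 𝓕 f = fun ξ => (N : ℂ) * G (N * ξ) := by
      funext ξ
      rw [hf', fourier_scale _ hN ξ]
      rfl
    have hFfO : 𝓕 f =O[cocompact ℝ] fun x : ℝ => |x| ^ (-2 : ℝ) := by
      rw [hFscale]
      exact (comp_mul_O hGO hN.ne').const_mul_left (N : ℂ)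
    have poisson := Real.tsum_eq_tsum_fourier_of_rpow_decay hfc one_lt_two hfO hFfO 0
    -- simplify both sides
    have hLHS : ∑' n : ℤ, f (0 + n) = ∑' n : ℤ, ((Φ ((n : ℝ) / N) : ℝ) : ℂ) := by
      simp [hf']
    have hRHS : ∑' m : ℤ, 𝓕 f m * fourier m ((0 : ℝ) : UnitAddCircle)
        = ∑' m : ℤ, (N : ℂ) * G (N * m) := by
      congr 1
      funext m
      rw [hFscale]
      norm_cast
      simp [fourier_eval_zero]
    have hGsummable : Summable (fun m : ℤ => (N : ℂ) * G (N * m)) := by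
      refine Summable.mul_left _ ?_
      refine Summable.of_norm_bounded_eventually
        (g := fun m : ℤ => N⁻¹ * (C / (m : ℝ) ^ 2) * N⁻¹) ?_ ?_
      · simpa [mul_one_div, mul_comm, mul_assoc, div_eq_mul_inv] using
          ((hsum2.mul_left (N⁻¹ * C * N⁻¹)).congr (fun m => by ring))
      · refine ((Set.finite_singleton (0 : ℤ)).eventually_cofinite_notMem).mono ?_
        intro m hm
        exact hbound N hN m (by simpa using hm)
    have hsplit := hGsummable.tsum_subtype_add_tsum_subtype_compl s
    have hsing : (∑' m : ↥s, (N : ℂ) * G (N * m)) = (N : ℂ) * G (N * (0 : ℤ)) :=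
      tsum_singleton (0 : ℤ) (fun m : ℤ => (N : ℂ) * G (N * m))
    have hG0 : G 0 = ((∫ x : ℝ, Φ x : ℝ) : ℂ) := by
      rw [hGdef, SchwartzMap.fourierTransformCLM_apply, SchwartzMap.fourier_coe, Real.fourier_real_eq]
      simp only [mul_zero, neg_zero, AddChar.map_zero_eq_one, one_smul, cpx_apply]
      exact integral_ofReal
    -- the error term
    set E : ℂ := ∑' m : ↥sᶜ, (N : ℂ) * G (N * m) with hE
    have hCrucial : ((∑' n : ℤ, Φ ((n : ℝ) / N)) : ℂ) = (N : ℂ) * ((∫ x : ℝ, Φ x : ℝ) : ℂ) + E := by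
      rw [← hLHS, poisson, hRHS, ← hsplit, hsing]
      simp [hG0]
    have hEbound : ‖E‖ ≤ N⁻¹ * K := by
      rw [hE]
      refine tsum_of_norm_bounded (hKsum.hasSum.mul_left N⁻¹) ?_
      intro m
      have hm0 : (m : ℤ) ≠ 0 := by
        intro h
        exact m.2 (by simp [hs, h])
      have := hbound N hN m hm0
      calc ‖(N : ℂ) * G (N * (m : ℤ))‖ = N * ‖G (N * (m : ℤ))‖ := by
            rw [norm_mul, Complex.norm_real, Real.norm_eq_abs, abs_of_pos hN]
        _ ≤ N * (N⁻¹ * (C / ((m : ℤ) : ℝ) ^ 2) * N⁻¹) := by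
            exact mul_le_mul_of_nonneg_left this hN.le
        _ = N⁻¹ * (C / ((m : ℤ) : ℝ) ^ 2) := by
            field_simp
    have : (((∑' x : ℤ, Φ ((x : ℝ) / N)) - (∫ x : ℝ, Φ x) * N : ℝ) : ℂ) = E := by
      rw [Complex.ofReal_sub, Complex.ofReal_tsum, Complex.ofReal_mul, hCrucial]
      ring
    calc ‖(∑' x : ℤ, Φ ((x : ℝ) / N)) - (∫ x : ℝ, Φ x) * N‖
        = ‖(((∑' x : ℤ, Φ ((x : ℝ) / N)) - (∫ x : ℝ, Φ x) * N : ℝ) : ℂ)‖ := by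
          rw [Complex.norm_real]
      _ = ‖E‖ := by rw [this]
      _ ≤ N⁻¹ * K := hEbound
  refine squeeze_zero_norm' (a := fun N : ℝ => N⁻¹ * K) ?_ ?_
  · exact (eventually_gt_atTop 0).mono (fun N hN => est N hN)
  · have : Tendsto (fun N : ℝ => N⁻¹ * K) atTop (nhds (0 * K)) :=
      tendsto_inv_atTop_zero.mul_const K
    simpa using this

theorem stmt_17 (p : ℕ) (hp : p.Prime) (Φ : SchwartzMap ℝ ℝ) :
    Filter.Tendsto (fun N : ℝ =>
      (∑' x : {x : ℤ // ¬ (p : ℤ) ∣ x}, Φ ((x : ℤ) / N)) -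
        ((p : ℝ) - 1) / p * (∫ x : ℝ, Φ x) * N)
      Filter.atTop (nhds 0) := by
  classical
  have hp0 : (0 : ℝ) < p := by exact_mod_cast hp.pos
  have hpZ : (p : ℤ) ≠ 0 := by exact_mod_cast hp.ne_zero
  obtain ⟨C, hCpos, hC⟩ := Φ.decay 2 0
  have hC' : ∀ x : ℝ, ‖x‖ ^ 2 * ‖Φ x‖ ≤ C := by
    intro x; have := hC x; rwa [norm_iteratedFDeriv_zero] at this
  have hsum : ∀ N : ℝ, 0 < N → Summable (fun n : ℤ => Φ ((n : ℝ) / N)) := by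
    intro N hN
    refine Summable.of_norm_bounded_eventually (g := fun n : ℤ => (C * N ^ 2) * (1 / (n : ℝ) ^ 2))
      ((summable_one_div_int_pow.mpr one_lt_two).mul_left _) ?_
    refine ((Set.finite_singleton (0 : ℤ)).eventually_cofinite_notMem).mono ?_
    intro n hn
    have hn0 : ((n : ℝ)) ≠ 0 := Int.cast_ne_zero.mpr (by simpa using hn)
    have hpos : (0 : ℝ) < ‖(n : ℝ) / N‖ ^ 2 :=
      pow_pos (norm_pos_iff.mpr (div_ne_zero hn0 hN.ne')) 2
    have h2 : ‖Φ ((n : ℝ) / N)‖ ≤ C / ‖(n : ℝ) / N‖ ^ 2 := by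
      rw [le_div_iff₀ hpos]; linarith [hC' ((n : ℝ) / N)]
    refine h2.trans (le_of_eq ?_)
    rw [Real.norm_eq_abs, _root_.sq_abs, div_pow, div_div_eq_mul_div]
    simp [div_eq_mul_inv]
  set s : Set ℤ := {x : ℤ | (p : ℤ) ∣ x} with hs
  have key2 : ∀ N : ℝ, 0 < N →
      (∑' x : {x : ℤ // ¬ (p : ℤ) ∣ x}, Φ (((x : ℤ) : ℝ) / N))
        = (∑' n : ℤ, Φ ((n : ℝ) / N)) - ∑' n : ℤ, Φ ((n : ℝ) / (N / p)) := by
    intro N hN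
    have h1 := (hsum N hN).tsum_subtype_add_tsum_subtype_compl s
    have hbij : Function.Bijective (fun y : ℤ => (⟨(p : ℤ) * y, dvd_mul_right _ _⟩ : ↥s)) := by
      constructor
      · intro a b hab
        have : (p : ℤ) * a = (p : ℤ) * b := congrArg Subtype.val hab
        exact mul_left_cancel₀ hpZ this
      · rintro ⟨x, hx⟩
        obtain ⟨c, rfl⟩ := hx
        exact ⟨c, rfl⟩
    have h2 : (∑' x : ↥s, Φ ((((x : ℤ)) : ℝ) / N)) = ∑' n : ℤ, Φ ((n : ℝ) / (N / p)) := by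
      rw [← (Equiv.ofBijective _ hbij).tsum_eq (fun x : ↥s => Φ ((((x : ℤ)) : ℝ) / N))]
      congr 1
      funext y
      have hxy : ((((p : ℤ) * y : ℤ)) : ℝ) / N = (y : ℝ) / (N / p) := by
        push_cast
        field_simp
      simp only [Equiv.ofBijective_apply]
      show Φ ((((p : ℤ) * y : ℤ) : ℝ) / N) = Φ ((y : ℝ) / (N / p))
      rw [hxy]
    have h3 : (∑' x : ↥sᶜ, Φ ((((x : ℤ)) : ℝ) / N))
        = ∑' x : {x : ℤ // ¬ (p : ℤ) ∣ x}, Φ (((x : ℤ) : ℝ) / N) := rfl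
    rw [← h3, eq_sub_iff_add_eq, ← h2, add_comm]
    exact h1
  have hkey := key Φ
  have hcomp : Tendsto (fun N : ℝ => N / (p : ℝ)) atTop atTop :=
    tendsto_id.atTop_div_const hp0
  have h2 := hkey.comp hcomp
  have h3 := hkey.sub h2
  refine Tendsto.congr' ?_ (by simpa using h3)
  filter_upwards [eventually_gt_atTop 0] with N hN
  rw [key2 N hN]

  field_simp
  simp only [mul_comm]
  ring
end
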